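/- Assume full NGMRES and GMRES are applied to Ax = b with the same initial guess x_0 ≠ x*, and for some k_0 > 0 the GMRES residuals satisfy r_{k_0−1}^G ≠ 0 and ‖r_{k−1}^G‖₂ > ‖r_k^G‖₂ for each k with 0 < k < k_0. If additionally r_{k_0}^G = r_{k_0−1}^G ≠ 0, then the full NGMRES residuals also stagnate: r_{k_0}^{NG} = r_{k_0−1}^{NG}. -/
import Mathlib


open Matrix Filter

noncomputable section

/-- The residual `r(x) = A x - b` of the linear system `A x = b`. -/
def residv {n : ℕ} (A : Matrix (Fin n) (Fin n) ℝ) (b x : Fin n → ℝ) : Fin n → ℝ :=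
  A.mulVec x - b

/-- The Euclidean 2-norm on `Fin n → ℝ`. -/
def norm2 {n : ℕ} (x : Fin n → ℝ) : ℝ := Real.sqrt (x ⬝ᵥ x)

/-- The fixed-point map `q(x) = M x + b` with `M = I - A`. -/
def qmap {n : ℕ} (A : Matrix (Fin n) (Fin n) ℝ) (b x : Fin n → ℝ) : Fin n → ℝ :=
  (1 - A).mulVec x + b

/-- One NGMRES update from step `k`, with window `mk` and coefficients `β`:
`x_{k+1} = q(x_k) + ∑_{i=0}^{mk} β_i (q(x_k) - x_{k-i})`. -/
def ngmresUpdate {n : ℕ} (A : Matrix (Fin n) (Fin n) ℝ) (b : Fin n → ℝ)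
    (x : ℕ → Fin n → ℝ) (β : ℕ → ℝ) (k mk : ℕ) : Fin n → ℝ :=
  qmap A b (x k) + ∑ i ∈ Finset.range (mk + 1), β i • (qmap A b (x k) - x (k - i))

/-- The NGMRES iteration with window function `mk` (e.g. `mk k = min k m` for NGMRES(m),
`mk k = k` for full NGMRES): each step uses coefficients minimizing the 2-norm of the
next residual. -/
def IsNGMRES {n : ℕ} (A : Matrix (Fin n) (Fin n) ℝ) (b x0 : Fin n → ℝ) (mk : ℕ → ℕ)
    (x : ℕ → Fin n → ℝ) (β : ℕ → ℕ → ℝ) : Prop :=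
  x 0 = x0 ∧ ∀ k, x (k + 1) = ngmresUpdate A b x (β k) k (mk k) ∧
    ∀ β' : ℕ → ℝ, norm2 (residv A b (x (k + 1))) ≤
      norm2 (residv A b (ngmresUpdate A b x β' k (mk k)))

/-- The Krylov subspace `span {r0, A r0, …, A^{k-1} r0}`. -/
def krylov {n : ℕ} (A : Matrix (Fin n) (Fin n) ℝ) (r0 : Fin n → ℝ) (k : ℕ) :
    Submodule ℝ (Fin n → ℝ) :=
  Submodule.span ℝ {v | ∃ i < k, v = (A ^ i).mulVec r0}

/-- GMRES: `x_k` minimizes the residual 2-norm over the affine space `x0 + K_k`. -/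
def IsGMRES {n : ℕ} (A : Matrix (Fin n) (Fin n) ℝ) (b x0 : Fin n → ℝ)
    (x : ℕ → Fin n → ℝ) : Prop :=
  x 0 = x0 ∧ ∀ k, x k - x0 ∈ krylov A (residv A b x0) k ∧
    ∀ y : Fin n → ℝ, y - x0 ∈ krylov A (residv A b x0) k →
      norm2 (residv A b (x k)) ≤ norm2 (residv A b y)

/-- One Anderson acceleration update from step `k`, with window `mk`:
`x_{k+1} = q(x_k) + ∑_{i=1}^{mk} γ_i (q(x_k) - q(x_{k-i}))`. -/
def aaUpdate {n : ℕ} (A : Matrix (Fin n) (Fin n) ℝ) (b : Fin n → ℝ)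
    (x : ℕ → Fin n → ℝ) (γ : ℕ → ℝ) (k mk : ℕ) : Fin n → ℝ :=
  qmap A b (x k) + ∑ i ∈ Finset.Icc 1 mk, γ i • (qmap A b (x k) - qmap A b (x (k - i)))

/-- The Anderson acceleration least-squares objective
`r(x_k) + ∑_{i=1}^{mk} γ_i (r(x_k) - r(x_{k-i}))`. -/
def aaObj {n : ℕ} (A : Matrix (Fin n) (Fin n) ℝ) (b : Fin n → ℝ)
    (x : ℕ → Fin n → ℝ) (γ : ℕ → ℝ) (k mk : ℕ) : Fin n → ℝ :=
  residv A b (x k) + ∑ i ∈ Finset.Icc 1 mk, γ i • (residv A b (x k) - residv A b (x (k - i)))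

/-- Anderson acceleration with window function `mk`. -/
def IsAA {n : ℕ} (A : Matrix (Fin n) (Fin n) ℝ) (b x0 : Fin n → ℝ) (mk : ℕ → ℕ)
    (x : ℕ → Fin n → ℝ) (γ : ℕ → ℕ → ℝ) : Prop :=
  x 0 = x0 ∧ ∀ k, x (k + 1) = aaUpdate A b x (γ k) k (mk k) ∧
    ∀ γ' : ℕ → ℝ, norm2 (aaObj A b x (γ k) k (mk k)) ≤ norm2 (aaObj A b x γ' k (mk k))

/-- The spectral norm `‖A‖₂` (the ℓ²→ℓ² operator norm). -/
def specNorm {n : ℕ} (A : Matrix (Fin n) (Fin n) ℝ) : ℝ :=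
  ‖LinearMap.toContinuousLinearMap (Matrix.toEuclideanLin A)‖

/-- The spectral radius of a real matrix (computed over `ℂ`). -/
def specRad {n : ℕ} (M : Matrix (Fin n) (Fin n) ℝ) : ℝ :=
  (spectralRadius ℂ (M.map Complex.ofReal)).toReal


section Aux
variable {n : ℕ}

lemma dotSelf_nonneg (v : Fin n → ℝ) : 0 ≤ v ⬝ᵥ v :=
  Finset.sum_nonneg fun _ _ => mul_self_nonneg _

lemma norm2_le_iff_dot (a c : Fin n → ℝ) : norm2 a ≤ norm2 c ↔ a ⬝ᵥ a ≤ c ⬝ᵥ c :=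
  Real.sqrt_le_sqrt_iff (dotSelf_nonneg _)

lemma residv_sub_residv (A : Matrix (Fin n) (Fin n) ℝ) (b y z : Fin n → ℝ) :
    residv A b y - residv A b z = A.mulVec (y - z) := by
  simp only [residv, Matrix.mulVec_sub]
  abel

lemma qmap_eq (A : Matrix (Fin n) (Fin n) ℝ) (b x : Fin n → ℝ) :
    qmap A b x = x - residv A b x := by
  simp only [qmap, residv, Matrix.sub_mulVec, Matrix.one_mulVec]
  abel

lemma residv_qmap (A : Matrix (Fin n) (Fin n) ℝ) (b x : Fin n → ℝ) :
    residv A b (qmap A b x) = (1 - A).mulVec (residv A b x) := by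
  simp only [residv, qmap, Matrix.mulVec_add, Matrix.sub_mulVec, Matrix.one_mulVec,
    Matrix.mulVec_sub]
  abel

lemma residv_ngmresUpdate (A : Matrix (Fin n) (Fin n) ℝ) (b : Fin n → ℝ)
    (x : ℕ → Fin n → ℝ) (β : ℕ → ℝ) (k mk : ℕ) :
    residv A b (ngmresUpdate A b x β k mk) =
      (1 - A).mulVec (residv A b (x k)) +
        ∑ i ∈ Finset.range (mk + 1), β i •
          ((1 - A).mulVec (residv A b (x k)) - residv A b (x (k - i))) := by
  have h1 : ∀ u v : Fin n → ℝ, residv A b (u + v) = residv A b u + A.mulVec v := by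
    intro u v
    simp only [residv, Matrix.mulVec_add]
    abel
  unfold ngmresUpdate
  rw [h1, residv_qmap]
  congr 1
  have h2 : A.mulVec (∑ i ∈ Finset.range (mk + 1), β i • (qmap A b (x k) - x (k - i)))
      = ∑ i ∈ Finset.range (mk + 1), β i • A.mulVec (qmap A b (x k) - x (k - i)) := by
    rw [show A.mulVec = A.mulVecLin from rfl, map_sum]
    exact Finset.sum_congr rfl fun i _ => _root_.map_smul _ _ _
  rw [h2]
  refine Finset.sum_congr rfl fun i _ => ?_
  rw [← residv_sub_residv, residv_qmap]

lemma mem_krylov_pow (A : Matrix (Fin n) (Fin n) ℝ) (r0 : Fin n → ℝ) {i k : ℕ} (h : i < k) :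
    (A ^ i).mulVec r0 ∈ krylov A r0 k :=
  Submodule.subset_span ⟨i, h, rfl⟩

lemma krylov_mono (A : Matrix (Fin n) (Fin n) ℝ) (r0 : Fin n → ℝ) {j k : ℕ} (h : j ≤ k) :
    krylov A r0 j ≤ krylov A r0 k :=
  Submodule.span_mono fun v hv => by
    obtain ⟨i, hi, rfl⟩ := hv; exact ⟨i, lt_of_lt_of_le hi h, rfl⟩

lemma r0_mem_krylov (A : Matrix (Fin n) (Fin n) ℝ) (r0 : Fin n → ℝ) {k : ℕ} (h : 0 < k) :
    r0 ∈ krylov A r0 k := by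
  have := mem_krylov_pow A r0 (i := 0) h
  simpa using this

lemma mulVec_mem_krylov (A : Matrix (Fin n) (Fin n) ℝ) (r0 : Fin n → ℝ) {k : ℕ}
    {v : Fin n → ℝ} (h : v ∈ krylov A r0 k) : A.mulVec v ∈ krylov A r0 (k + 1) := by
  induction h using Submodule.span_induction with
  | mem w hw =>
    obtain ⟨i, hi, rfl⟩ := hw
    rw [Matrix.mulVec_mulVec, ← pow_succ']
    exact mem_krylov_pow A r0 (by omega)
  | zero => rw [Matrix.mulVec_zero]; exact zero_mem _
  | add u w _ _ hu hw => rw [Matrix.mulVec_add]; exact add_mem hu hw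
  | smul a u _ hu => rw [Matrix.mulVec_smul]; exact Submodule.smul_mem _ _ hu

lemma krylov_succ (A : Matrix (Fin n) (Fin n) ℝ) (r0 : Fin n → ℝ) (k : ℕ) :
    krylov A r0 (k + 1) = krylov A r0 k ⊔ Submodule.span ℝ {(A ^ k).mulVec r0} := by
  unfold krylov
  rw [← Submodule.span_union]
  congr 1
  ext v
  simp only [Set.mem_setOf_eq, Set.mem_union, Set.mem_singleton_iff]
  constructor
  · rintro ⟨i, hi, rfl⟩
    rcases Nat.lt_succ_iff_lt_or_eq.mp hi with h | h
    · exact Or.inl ⟨i, h, rfl⟩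
    · subst h; exact Or.inr rfl
  · rintro (⟨i, hi, rfl⟩ | rfl)
    · exact ⟨i, Nat.lt_succ_of_lt hi, rfl⟩
    · exact ⟨k, Nat.lt_succ_self k, rfl⟩

lemma krylov_zero (A : Matrix (Fin n) (Fin n) ℝ) (r0 : Fin n → ℝ) : krylov A r0 0 = ⊥ := by
  unfold krylov
  convert Submodule.span_empty (R := ℝ)
  ext v; simp

end Aux
section Aux2
variable {n : ℕ}

lemma residv_eq_of_norm_eq (A : Matrix (Fin n) (Fin n) ℝ) (b x0 : Fin n → ℝ)
    (K : Submodule ℝ (Fin n → ℝ)) (y xg : Fin n → ℝ)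
    (hy : y - x0 ∈ K) (hxg : xg - x0 ∈ K)
    (hmin : ∀ z : Fin n → ℝ, z - x0 ∈ K → norm2 (residv A b xg) ≤ norm2 (residv A b z))
    (heq : norm2 (residv A b y) = norm2 (residv A b xg)) :
    residv A b y = residv A b xg := by
  set u := residv A b y with hu
  set v := residv A b xg with hv
  have hmid : ((1:ℝ)/2) • (y + xg) - x0 ∈ K := by
    have e : ((1:ℝ)/2) • (y + xg) - x0 = ((1:ℝ)/2) • ((y - x0) + (xg - x0)) := by
      ext i; simp; ring
    rw [e]; exact K.smul_mem _ (K.add_mem hy hxg)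
  have hres : residv A b (((1:ℝ)/2) • (y + xg)) = ((1:ℝ)/2) • (u + v) := by
    rw [hu, hv]
    unfold residv
    rw [Matrix.mulVec_smul, Matrix.mulVec_add]
    ext i; simp; ring
  have h1 := hmin _ hmid
  rw [hres] at h1
  have hd1 : v ⬝ᵥ v ≤ (((1:ℝ)/2) • (u + v)) ⬝ᵥ (((1:ℝ)/2) • (u + v)) :=
    (norm2_le_iff_dot _ _).mp h1
  have heqd : u ⬝ᵥ u = v ⬝ᵥ v :=
    le_antisymm ((norm2_le_iff_dot _ _).mp heq.le) ((norm2_le_iff_dot _ _).mp heq.ge)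
  have e1 : (((1:ℝ)/2) • (u + v)) ⬝ᵥ (((1:ℝ)/2) • (u + v))
      = (1/4) * (u ⬝ᵥ u) + (1/2) * (u ⬝ᵥ v) + (1/4) * (v ⬝ᵥ v) := by
    rw [smul_dotProduct, dotProduct_smul, dotProduct_add,
      add_dotProduct, add_dotProduct, dotProduct_comm v u]
    simp [smul_eq_mul]; ring
  have e2 : (u - v) ⬝ᵥ (u - v) = u ⬝ᵥ u - 2 * (u ⬝ᵥ v) + v ⬝ᵥ v := by
    rw [dotProduct_sub, sub_dotProduct, sub_dotProduct,
      dotProduct_comm v u]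
    ring
  have hz : (u - v) ⬝ᵥ (u - v) = 0 := by
    have := dotSelf_nonneg (u - v)
    rw [e1] at hd1
    linarith [e2]
  have := dotProduct_self_eq_zero.mp hz
  have : u = v := by rwa [sub_eq_zero] at this
  rw [hu, hv] at this
  exact this

lemma exists_coeffs {k : ℕ} (v : ℕ → Fin n → ℝ) (w : Fin n → ℝ)
    (hw : w ∈ Submodule.span ℝ {u | ∃ i ≤ k, u = v i}) :
    ∃ β : ℕ → ℝ, ∑ i ∈ Finset.range (k + 1), β i • v i = w := by
  have hset : {u | ∃ i ≤ k, u = v i} = Set.range (fun i : Fin (k+1) => v i) := by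
    ext u
    constructor
    · rintro ⟨i, hi, rfl⟩; exact ⟨⟨i, Nat.lt_succ_of_le hi⟩, rfl⟩
    · rintro ⟨i, rfl⟩; exact ⟨i, Nat.lt_succ_iff.mp i.isLt, rfl⟩
  rw [hset, Submodule.mem_span_range_iff_exists_fun] at hw
  obtain ⟨c, hc⟩ := hw
  refine ⟨fun i => if h : i < k + 1 then c ⟨i, h⟩ else 0, ?_⟩
  rw [← hc, ← Fin.sum_univ_eq_sum_range
    (fun i => (if h : i < k + 1 then c ⟨i, h⟩ else 0) • v i) (k+1)]
  exact Finset.sum_congr rfl fun i _ => by rw [dif_pos i.isLt, Fin.eta]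

end Aux2
section Aux3
variable {n : ℕ}

lemma step_mem (A : Matrix (Fin n) (Fin n) ℝ) (b x0 : Fin n → ℝ)
    (x : ℕ → Fin n → ℝ) (β : ℕ → ℝ) (j : ℕ)
    (ha : ∀ i ≤ j, x i - x0 ∈ krylov A (residv A b x0) i) :
    ngmresUpdate A b x β j j - x0 ∈ krylov A (residv A b x0) (j + 1) := by
  have hq : qmap A b (x j) - x0 ∈ krylov A (residv A b x0) (j + 1) := by
    have h2 : residv A b (x j) - residv A b x0 = A.mulVec (x j - x0) :=
      residv_sub_residv A b (x j) x0
    have e : qmap A b (x j) - x0 =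
        (x j - x0) - A.mulVec (x j - x0) - residv A b x0 := by
      rw [qmap_eq, ← h2]
      abel
    rw [e]
    exact sub_mem (sub_mem (krylov_mono A _ (Nat.le_succ j) (ha j le_rfl))
      (mulVec_mem_krylov A _ (ha j le_rfl))) (r0_mem_krylov A _ (Nat.succ_pos j))
  have e2 : ngmresUpdate A b x β j j - x0 =
      (qmap A b (x j) - x0) +
        ∑ i ∈ Finset.range (j + 1), β i • ((qmap A b (x j) - x0) - (x (j - i) - x0)) := by
    unfold ngmresUpdate
    have e3 : ∀ i : ℕ, (qmap A b (x j) - x0) - (x (j - i) - x0) = qmap A b (x j) - x (j - i) :=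
      fun i => sub_sub_sub_cancel_right _ _ _
    simp only [e3]
    abel
  rw [e2]
  refine add_mem hq (Submodule.sum_mem _ fun i _ => Submodule.smul_mem _ _ (sub_mem hq ?_))
  exact krylov_mono A _ (le_trans (Nat.sub_le j i) (Nat.le_succ j)) (ha (j - i) (Nat.sub_le j i))

lemma step_span (A : Matrix (Fin n) (Fin n) ℝ) (b x0 : Fin n → ℝ)
    (x : ℕ → Fin n → ℝ) (j : ℕ)
    (hx0 : x 0 = x0)
    (ha : ∀ i ≤ j, x i - x0 ∈ krylov A (residv A b x0) i)
    (hc : krylov A (residv A b x0) j ≤ Submodule.span ℝ {u | ∃ i ≤ j, u = x i - x0})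
    (hd : krylov A (residv A b x0) (j + 1) ≤
      krylov A (residv A b x0) j ⊔ Submodule.span ℝ {residv A b (x j)})
    (w : Fin n → ℝ) (hw : w - x0 ∈ krylov A (residv A b x0) (j + 1)) :
    ∃ β' : ℕ → ℝ, residv A b (ngmresUpdate A b x β' j j) = residv A b w := by
  set Mr : Fin n → ℝ := (1 - A).mulVec (residv A b (x j)) with hMr
  set S : Submodule ℝ (Fin n → ℝ) :=
    Submodule.span ℝ {u | ∃ i ≤ j, u = Mr - residv A b (x i)} with hS
  have s_gen : ∀ i ≤ j, Mr - residv A b (x i) ∈ S :=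
    fun i hi => Submodule.subset_span ⟨i, hi, rfl⟩
  have h0 : Mr - residv A b x0 ∈ S := by
    have := s_gen 0 (Nat.zero_le j)
    rwa [hx0] at this
  have s_diff : ∀ i ≤ j, residv A b (x i) - residv A b x0 ∈ S := by
    intro i hi
    have e : residv A b (x i) - residv A b x0
        = (Mr - residv A b x0) - (Mr - residv A b (x i)) := by abel
    rw [e]
    exact sub_mem h0 (s_gen i hi)
  have s_mulveci : ∀ i ≤ j, A.mulVec (x i - x0) ∈ S := by
    intro i hi
    rw [← residv_sub_residv]
    exact s_diff i hi
  have s_mapKj : Submodule.map (Matrix.mulVecLin A) (krylov A (residv A b x0) j) ≤ S := by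
    refine le_trans (Submodule.map_mono hc) ?_
    rw [Submodule.map_span]
    refine Submodule.span_le.mpr ?_
    rintro u ⟨w', ⟨i, hi, rfl⟩, rfl⟩
    simpa [Matrix.mulVecLin_apply] using s_mulveci i hi
  have s_Arj : A.mulVec (residv A b (x j)) ∈ S := by
    have e : A.mulVec (residv A b (x j)) =
        (residv A b (x j) - residv A b x0) - (Mr - residv A b x0) := by
      rw [hMr, Matrix.sub_mulVec, Matrix.one_mulVec]
      abel
    rw [e]
    exact sub_mem (s_diff j le_rfl) h0
  have s_mapK1 : Submodule.map (Matrix.mulVecLin A) (krylov A (residv A b x0) (j + 1)) ≤ S := by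
    refine le_trans (Submodule.map_mono hd) ?_
    rw [Submodule.map_sup]
    refine sup_le s_mapKj ?_
    rw [Submodule.map_span, Set.image_singleton]
    refine Submodule.span_le.mpr ?_
    intro u hu
    rw [Set.mem_singleton_iff] at hu
    subst hu
    simpa [Matrix.mulVecLin_apply] using s_Arj
  have s_final : residv A b w - Mr ∈ S := by
    have hmem : w - x j ∈ krylov A (residv A b x0) (j + 1) := by
      have e : w - x j = (w - x0) - (x j - x0) := by abel
      rw [e]
      exact sub_mem hw (krylov_mono A _ (Nat.le_succ j) (ha j le_rfl))
    have e : residv A b w - Mr = A.mulVec (w - x j) + A.mulVec (residv A b (x j)) := by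
      rw [← residv_sub_residv, hMr, Matrix.sub_mulVec, Matrix.one_mulVec]
      abel
    rw [e]
    refine add_mem ?_ s_Arj
    have := s_mapK1 (Submodule.mem_map_of_mem hmem)
    simpa [Matrix.mulVecLin_apply] using this
  have hsets : {u | ∃ i ≤ j, u = Mr - residv A b (x (j - i))}
      = {u | ∃ i ≤ j, u = Mr - residv A b (x i)} := by
    ext u
    constructor
    · rintro ⟨i, hi, rfl⟩; exact ⟨j - i, Nat.sub_le j i, rfl⟩
    · rintro ⟨i, hi, rfl⟩
      exact ⟨j - i, Nat.sub_le j i, by rw [Nat.sub_sub_self hi]⟩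
  have s_final' : residv A b w - Mr ∈
      Submodule.span ℝ {u | ∃ i ≤ j, u = Mr - residv A b (x (j - i))} := by
    rw [hsets]
    exact s_final
  obtain ⟨β', hβ'⟩ := exists_coeffs (fun i => Mr - residv A b (x (j - i))) _ s_final'
  refine ⟨β', ?_⟩
  rw [residv_ngmresUpdate]
  have hsum : ∑ i ∈ Finset.range (j + 1), β' i •
      ((1 - A).mulVec (residv A b (x j)) - residv A b (x (j - i)))
      = residv A b w - (1 - A).mulVec (residv A b (x j)) := hβ'
  rw [hsum]
  abel

end Aux3

/-- if additionally GMRES stagnates at step `k0`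
(`r_{k0}^G = r_{k0-1}^G ≠ 0`), then full NGMRES stagnates too. -/
theorem stmt4 (n : ℕ) (A : Matrix (Fin n) (Fin n) ℝ) (b x0 xstar : Fin n → ℝ)
    (xNG xG : ℕ → Fin n → ℝ) (β : ℕ → ℕ → ℝ)
    (hNG : IsNGMRES A b x0 (fun k => k) xNG β)
    (hG : IsGMRES A b x0 xG)
    (hstar : A.mulVec xstar = b) (hx0 : x0 ≠ xstar)
    (k0 : ℕ) (hk0 : 0 < k0)
    (hrk0 : residv A b (xG (k0 - 1)) ≠ 0)
    (hdec : ∀ k, 0 < k → k < k0 →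
      norm2 (residv A b (xG k)) < norm2 (residv A b (xG (k - 1))))
    (hstag : residv A b (xG k0) = residv A b (xG (k0 - 1))) :
    residv A b (xNG k0) = residv A b (xNG (k0 - 1)) := by
  obtain ⟨hNG0, hNGs⟩ := hNG
  obtain ⟨hG0, hGs⟩ := hG
  have hupdate : ∀ j, xNG (j + 1) = ngmresUpdate A b xNG (β j) j j := fun j => (hNGs j).1
  have hmin : ∀ (j : ℕ) (β' : ℕ → ℝ), norm2 (residv A b (xNG (j + 1))) ≤
      norm2 (residv A b (ngmresUpdate A b xNG β' j j)) := fun j => (hNGs j).2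
  have main : ∀ j, j < k0 →
      (∀ i ≤ j, xNG i - x0 ∈ krylov A (residv A b x0) i) ∧
      residv A b (xNG j) = residv A b (xG j) ∧
      krylov A (residv A b x0) j ≤ Submodule.span ℝ {u | ∃ i ≤ j, u = xNG i - x0} ∧
      krylov A (residv A b x0) (j + 1) ≤
        krylov A (residv A b x0) j ⊔ Submodule.span ℝ {residv A b (xNG j)} := by
    intro j
    induction j with
    | zero =>
      intro _
      refine ⟨?_, by rw [hNG0, hG0], ?_, ?_⟩
      · intro i hi
        obtain rfl : i = 0 := Nat.le_zero.mp hi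
        rw [hNG0, sub_self]
        exact zero_mem _
      · rw [krylov_zero]; exact bot_le
      · rw [krylov_succ, pow_zero, Matrix.one_mulVec, hNG0]
    | succ j ih =>
      intro hj
      obtain ⟨ha, hb, hc, hd⟩ := ih (Nat.lt_of_succ_lt hj)
      have ha' : ∀ i ≤ j + 1, xNG i - x0 ∈ krylov A (residv A b x0) i := by
        intro i hi
        rcases Nat.lt_or_ge i (j + 1) with h | h
        · exact ha i (Nat.lt_succ_iff.mp h)
        · obtain rfl : i = j + 1 := le_antisymm hi h
          rw [hupdate j]
          exact step_mem A b x0 xNG (β j) j ha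
      obtain ⟨β', hβ'⟩ := step_span A b x0 xNG j hNG0 ha hc hd (xG (j + 1)) (hGs (j + 1)).1
      have hub : norm2 (residv A b (xNG (j + 1))) ≤ norm2 (residv A b (xG (j + 1))) := by
        have := hmin j β'
        rwa [hβ'] at this
      have hbeq : norm2 (residv A b (xNG (j + 1))) = norm2 (residv A b (xG (j + 1))) :=
        le_antisymm hub ((hGs (j + 1)).2 _ (ha' (j + 1) le_rfl))
      have hb' : residv A b (xNG (j + 1)) = residv A b (xG (j + 1)) :=
        residv_eq_of_norm_eq A b x0 _ _ _ (ha' (j + 1) le_rfl) (hGs (j + 1)).1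
          (fun z hz => (hGs (j + 1)).2 z hz) hbeq
      have hnot : xNG (j + 1) - x0 ∉ krylov A (residv A b x0) j := by
        intro hmem
        have h1 : norm2 (residv A b (xG j)) ≤ norm2 (residv A b (xNG (j + 1))) :=
          (hGs j).2 _ hmem
        have h2 := hdec (j + 1) (Nat.succ_pos j) hj
        simp only [Nat.add_sub_cancel] at h2
        rw [hb'] at h1
        linarith
      have hmem1 : xNG (j + 1) - x0 ∈ krylov A (residv A b x0) j ⊔
          Submodule.span ℝ {(A ^ j).mulVec (residv A b x0)} := by
        rw [← krylov_succ]
        exact ha' (j + 1) le_rfl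
      obtain ⟨u, hu, z, hz, huz⟩ := Submodule.mem_sup.mp hmem1
      obtain ⟨c, rfl⟩ := Submodule.mem_span_singleton.mp hz
      have hc0 : c ≠ 0 := by
        rintro rfl
        apply hnot
        rw [← huz, zero_smul, add_zero]
        exact hu
      have hsubmono : Submodule.span ℝ {u | ∃ i ≤ j, u = xNG i - x0} ≤
          Submodule.span ℝ {u | ∃ i ≤ j + 1, u = xNG i - x0} :=
        Submodule.span_mono (by rintro w ⟨i, hi, rfl⟩; exact ⟨i, Nat.le_succ_of_le hi, rfl⟩)
      have hc' : krylov A (residv A b x0) (j + 1) ≤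
          Submodule.span ℝ {u | ∃ i ≤ j + 1, u = xNG i - x0} := by
        rw [krylov_succ]
        refine sup_le (hc.trans hsubmono) ?_
        refine Submodule.span_le.mpr ?_
        intro w hw
        rw [Set.mem_singleton_iff] at hw
        subst hw
        have e : (A ^ j).mulVec (residv A b x0) = c⁻¹ • ((xNG (j + 1) - x0) - u) := by
          rw [← huz, add_sub_cancel_left, smul_smul, inv_mul_cancel₀ hc0, one_smul]
        rw [e]
        refine Submodule.smul_mem _ _ (sub_mem ?_ ?_)
        · exact Submodule.subset_span ⟨j + 1, le_rfl, rfl⟩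
        · exact (hc.trans hsubmono) hu
      have hd' : krylov A (residv A b x0) (j + 2) ≤
          krylov A (residv A b x0) (j + 1) ⊔ Submodule.span ℝ {residv A b (xNG (j + 1))} := by
        rw [krylov_succ]
        refine sup_le le_sup_left ?_
        refine Submodule.span_le.mpr ?_
        intro w hw
        rw [Set.mem_singleton_iff] at hw
        subst hw
        have hrel : residv A b (xNG (j + 1)) - residv A b x0
            = A.mulVec u + c • (A ^ (j + 1)).mulVec (residv A b x0) := by
          rw [residv_sub_residv, ← huz, Matrix.mulVec_add, Matrix.mulVec_smul,
            Matrix.mulVec_mulVec, ← pow_succ']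
        have e : (A ^ (j + 1)).mulVec (residv A b x0)
            = c⁻¹ • (residv A b (xNG (j + 1)) - residv A b x0 - A.mulVec u) := by
          rw [hrel, add_sub_cancel_left, smul_smul, inv_mul_cancel₀ hc0, one_smul]
        rw [e]
        refine Submodule.smul_mem _ _ (sub_mem (sub_mem ?_ ?_) ?_)
        · exact Submodule.mem_sup_right (Submodule.mem_span_singleton_self _)
        · exact Submodule.mem_sup_left (r0_mem_krylov A _ (Nat.succ_pos j))
        · exact Submodule.mem_sup_left (mulVec_mem_krylov A _ hu)
      exact ⟨ha', hb', hc', hd'⟩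
  obtain ⟨ha, hb, -, -⟩ := main (k0 - 1) (Nat.sub_lt hk0 one_pos)
  have hk : k0 - 1 + 1 = k0 := Nat.succ_pred_eq_of_pos hk0
  have haK : xNG k0 - x0 ∈ krylov A (residv A b x0) k0 := by
    rw [← hk, hupdate (k0 - 1)]
    exact step_mem A b x0 xNG (β (k0 - 1)) (k0 - 1) ha
  have hub : norm2 (residv A b (xNG k0)) ≤ norm2 (residv A b (xNG (k0 - 1))) := by
    have h1 := hmin (k0 - 1) (fun i => if i = 0 then (-1 : ℝ) else 0)
    rw [hk] at h1
    refine h1.trans (le_of_eq ?_)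
    congr 1
    rw [residv_ngmresUpdate]
    rw [Finset.sum_eq_single_of_mem 0 (Finset.mem_range.mpr (Nat.succ_pos _))
      (fun i _ hi => by simp [hi])]
    rw [if_pos rfl, Nat.sub_zero, neg_one_smul]
    abel
  have h2 : norm2 (residv A b (xNG (k0 - 1))) = norm2 (residv A b (xG k0)) := by
    rw [hb, hstag]
  have heqn : norm2 (residv A b (xNG k0)) = norm2 (residv A b (xG k0)) :=
    le_antisymm (hub.trans h2.le) ((hGs k0).2 _ haK)
  have hfin : residv A b (xNG k0) = residv A b (xG k0) :=
    residv_eq_of_norm_eq A b x0 _ _ _ haK (hGs k0).1 (fun z hz => (hGs k0).2 z hz) heqn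
  rw [hfin, hstag, ← hb]

end
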